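/- A real number x is rational if and only if there exists a matrix M = !![a, b; c, d] in SL(2, ℤ) with M ≠ 1, M ≠ -1, |a + d| = 2 (i.e. M is parabolic), and a·x + b = x·(c·x + d) (i.e. x is a fixed point of the Möbius transformation associated to M). -/
import Mathlib


/-- A real number `x` is rational if and only if it is a fixed point of a parabolic
element of `SL(2, ℤ)` acting by Möbius transformations. -/
theorem rational_iff_parabolic_fixed_point (x : ℝ) :
    (∃ q : ℚ, (q : ℝ) = x) ↔
      ∃ M : Matrix.SpecialLinearGroup (Fin 2) ℤ,
        M ≠ 1 ∧ M ≠ -1 ∧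
        |(M : Matrix (Fin 2) (Fin 2) ℤ) 0 0 + (M : Matrix (Fin 2) (Fin 2) ℤ) 1 1| = 2 ∧
        ((M : Matrix (Fin 2) (Fin 2) ℤ) 0 0 : ℝ) * x + ((M : Matrix (Fin 2) (Fin 2) ℤ) 0 1 : ℝ)
          = x * (((M : Matrix (Fin 2) (Fin 2) ℤ) 1 0 : ℝ) * x
              + ((M : Matrix (Fin 2) (Fin 2) ℤ) 1 1 : ℝ)) := by
  constructor
  · rintro ⟨q, rfl⟩
    set p : ℤ := q.num with hp
    set n : ℤ := (q.den : ℤ) with hn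
    have hn0 : n ≠ 0 := by
      simp [hn, q.den_nz]
    have hdet : (!![1 - p * n, p ^ 2; -n ^ 2, 1 + p * n] : Matrix (Fin 2) (Fin 2) ℤ).det = 1 := by
      simp [Matrix.det_fin_two_of]; ring
    refine ⟨⟨!![1 - p * n, p ^ 2; -n ^ 2, 1 + p * n], hdet⟩, ?_, ?_, ?_, ?_⟩
    · intro h
      have := congrArg (fun N : Matrix.SpecialLinearGroup (Fin 2) ℤ => (N : Matrix (Fin 2) (Fin 2) ℤ) 1 0) h
      simp at this
      exact hn0 this
    · intro h
      have := congrArg (fun N : Matrix.SpecialLinearGroup (Fin 2) ℤ => (N : Matrix (Fin 2) (Fin 2) ℤ) 1 0) h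
      simp [Matrix.SpecialLinearGroup.coe_neg] at this
      exact hn0 this
    · show |(1 - p * n) + (1 + p * n)| = 2
      norm_num
    · have hx : (n : ℝ) * (q : ℝ) = (p : ℝ) := by
        rw [hp, hn, Rat.cast_def]
        push_cast
        field_simp
      show ((1 - p * n : ℤ) : ℝ) * q + ((p ^ 2 : ℤ) : ℝ)
          = (q : ℝ) * (((-n ^ 2 : ℤ) : ℝ) * q + ((1 + p * n : ℤ) : ℝ))
      push_cast
      linear_combination ((n : ℝ) * (q : ℝ) - (p : ℝ)) * hx
  · rintro ⟨M, hM1, hMn1, htr, hfix⟩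
    set a : ℤ := (M : Matrix (Fin 2) (Fin 2) ℤ) 0 0 with ha
    set b : ℤ := (M : Matrix (Fin 2) (Fin 2) ℤ) 0 1 with hb
    set c : ℤ := (M : Matrix (Fin 2) (Fin 2) ℤ) 1 0 with hc
    set d : ℤ := (M : Matrix (Fin 2) (Fin 2) ℤ) 1 1 with hd
    have hdet : a * d - b * c = 1 := by
      have := M.property
      rwa [Matrix.det_fin_two] at this
    have h4 : ((a : ℝ) + d) ^ 2 = 4 := by
      rcases abs_eq (by norm_num : (0:ℤ) ≤ 2) |>.mp htr with h | h
      · have : (a : ℝ) + d = 2 := by exact_mod_cast h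
        rw [this]; norm_num
      · have : (a : ℝ) + d = -2 := by exact_mod_cast h
        rw [this]; norm_num
    have hdetR : (a : ℝ) * d - b * c = 1 := by exact_mod_cast hdet
    by_cases hc0 : c = 0
    · exfalso
      have had : a * d = 1 := by rw [hc0] at hdet; linarith
      rcases Int.eq_one_or_neg_one_of_mul_eq_one' had with ⟨ha1, hd1⟩ | ⟨ha1, hd1⟩
      · have hbR : (b : ℝ) = 0 := by
          rw [hc0] at hfix
          push_cast [ha1, hd1] at hfix
          linarith
        have hb0 : b = 0 := by exact_mod_cast hbR
        apply hM1
        ext i j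
        fin_cases i <;> fin_cases j <;>
          simp [← ha, ← hb, ← hc, ← hd, ha1, hb0, hc0, hd1]
      · have hbR : (b : ℝ) = 0 := by
          rw [hc0] at hfix
          push_cast [ha1, hd1] at hfix
          linarith
        have hb0 : b = 0 := by exact_mod_cast hbR
        apply hMn1
        ext i j
        fin_cases i <;> fin_cases j <;>
          simp [← ha, ← hb, ← hc, ← hd, ha1, hb0, hc0, hd1]
    · have h2 : (2 * (c : ℝ) * x - ((a : ℝ) - d)) ^ 2 = 0 := by
        linear_combination (-4 * (c : ℝ)) * hfix + h4 + (-4) * hdetR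
      have h2' : 2 * (c : ℝ) * x = (a : ℝ) - d := by
        have := pow_eq_zero_iff (n := 2) (by norm_num) |>.mp h2
        linarith
      refine ⟨(a - d : ℚ) / (2 * c), ?_⟩
      have hcR : (c : ℝ) ≠ 0 := Int.cast_ne_zero.mpr hc0
      push_cast
      field_simp
      linarith [h2']
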